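/- Let f : ℤ² → {contact elements} be a discrete Dupin cyclide such that for every n ∈ ℤ the subspace span{s⁻(m,n) : m ∈ ℤ} is 3-dimensional. Then there exists a single Dupin cyclide (D⁺, D⁻) such that s⁺(m,n) ⊆ D⁺ and s⁻(m,n) ⊆ D⁻ for all m, n ∈ ℤ, and the constant assignment of (D⁺, D⁻) to every face is a face-cyclide congruence for f. (The two curvature sphere congruences of a discrete Dupin cyclide lie in two fixed orthogonal (2,1)-planes of ℝ^{4,2}, and its Lie cyclide congruence is constant.) -/

import Mathlib

noncomputable section

/-- The Lie sphere geometric model: `ℝ^{4,2}`. -/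
abbrev V6 : Type := Fin 6 → ℝ

/-- The symmetric bilinear form of signature `(4,2)` on `V6`. -/
def B (x y : V6) : ℝ :=
  x 0 * y 0 + x 1 * y 1 + x 2 * y 2 + x 3 * y 3 - x 4 * y 4 - x 5 * y 5

/-- An oriented sphere: a 1-dimensional isotropic subspace. -/
def IsSphere (S : Submodule ℝ V6) : Prop :=
  Module.finrank ℝ S = 1 ∧ ∀ x ∈ S, B x x = 0

/-- A contact element: a 2-dimensional totally isotropic subspace. -/
def IsContact (W : Submodule ℝ V6) : Prop :=
  Module.finrank ℝ W = 2 ∧ ∀ x ∈ W, ∀ y ∈ W, B x y = 0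

/-- A `(2,1)`-plane: 3-dim subspace on which the form is nondegenerate of signature `(2,1)`. -/
def IsSig21 (D : Submodule ℝ V6) : Prop :=
  ∃ u v w : V6, D = Submodule.span ℝ {u, v, w} ∧
    B u u = 1 ∧ B v v = 1 ∧ B w w = -1 ∧ B u v = 0 ∧ B u w = 0 ∧ B v w = 0

/-- A Dupin cyclide: a pair of `(2,1)`-planes, the second the orthogonal complement of the first. -/
def IsDupin (D E : Submodule ℝ V6) : Prop :=
  IsSig21 D ∧ IsSig21 E ∧ ∀ x : V6, x ∈ E ↔ ∀ y ∈ D, B x y = 0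

/-- Horizontal curvature sphere on the edge from `(m,n)` to `(m+1,n)`. -/
def sPlus (f : ℤ × ℤ → Submodule ℝ V6) (m n : ℤ) : Submodule ℝ V6 :=
  f (m, n) ⊓ f (m + 1, n)

/-- Vertical curvature sphere on the edge from `(m,n)` to `(m,n+1)`. -/
def sMinus (f : ℤ × ℤ → Submodule ℝ V6) (m n : ℤ) : Submodule ℝ V6 :=
  f (m, n) ⊓ f (m, n + 1)

/-- A discrete Legendre map. -/
def IsLegendre (f : ℤ × ℤ → Submodule ℝ V6) : Prop :=
  (∀ p : ℤ × ℤ, IsContact (f p)) ∧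
  (∀ m n : ℤ, Module.finrank ℝ (sPlus f m n) = 1) ∧
  (∀ m n : ℤ, Module.finrank ℝ (sMinus f m n) = 1)

/-- A face-cyclide congruence for `f`. -/
def IsFaceCyclideCongruence (f D E : ℤ × ℤ → Submodule ℝ V6) : Prop :=
  ∀ m n : ℤ,
    IsDupin (D (m, n)) (E (m, n)) ∧
    sPlus f m n ≤ D (m, n) ∧ sPlus f m (n + 1) ≤ D (m, n) ∧
    sMinus f m n ≤ E (m, n) ∧ sMinus f (m + 1) n ≤ E (m, n)

/-- A discrete channel surface with circular direction `+`. -/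
def IsChannelPlus (f : ℤ × ℤ → Submodule ℝ V6) : Prop :=
  IsLegendre f ∧
  ∃ D E : ℤ × ℤ → Submodule ℝ V6,
    IsFaceCyclideCongruence f D E ∧
    ∀ m m' n : ℤ, D (m, n) = D (m', n) ∧ E (m, n) = E (m', n)

/-- The orthogonal complement of a point sphere complex `p`. -/
def pPerp (p : V6) : Submodule ℝ V6 where
  carrier := {x | B x p = 0}
  add_mem' := by
    intro a b ha hb
    simp only [Set.mem_setOf_eq, B, Pi.add_apply] at *
    linear_combination ha + hb
  zero_mem' := by simp [B]
  smul_mem' := by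
    intro c x hx
    simp only [Set.mem_setOf_eq, B, Pi.smul_apply, smul_eq_mul] at *
    linear_combination c * hx

/-- A discrete channel surface with circular direction `−`. -/
def IsChannelMinus (f : ℤ × ℤ → Submodule ℝ V6) : Prop :=
  IsLegendre f ∧
  ∃ D E : ℤ × ℤ → Submodule ℝ V6,
    IsFaceCyclideCongruence f D E ∧
    ∀ m n n' : ℤ, D (m, n) = D (m, n') ∧ E (m, n) = E (m, n')

/-- A discrete Dupin cyclide: a discrete channel surface with respect to both directions. -/
def IsDiscreteDupin (f : ℤ × ℤ → Submodule ℝ V6) : Prop :=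
  IsChannelPlus f ∧ IsChannelMinus f

open Module

lemma B_symm (x y : V6) : B x y = B y x := by unfold B; ring

lemma B_add_left (x y z : V6) : B (x + y) z = B x z + B y z := by
  simp only [B, Pi.add_apply]; ring

lemma B_sub_left (x y z : V6) : B (x - y) z = B x z - B y z := by
  simp only [B, Pi.sub_apply]; ring

lemma B_smul_left (a : ℝ) (x y : V6) : B (a • x) y = a * B x y := by
  simp only [B, Pi.smul_apply, smul_eq_mul]; ring

lemma B_zero_left (y : V6) : B 0 y = 0 := by simp [B]

lemma mem_span_triple {u v w x : V6} :
    x ∈ Submodule.span ℝ {u, v, w} ↔ ∃ a b c : ℝ, x = a • u + b • v + c • w := by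
  constructor
  · intro hx
    rw [show ({u, v, w} : Set V6) = insert u (insert v {w}) from rfl,
      Submodule.mem_span_insert] at hx
    obtain ⟨a, z, hz, rfl⟩ := hx
    rw [Submodule.mem_span_insert] at hz
    obtain ⟨b, z', hz', rfl⟩ := hz
    rw [Submodule.mem_span_singleton] at hz'
    obtain ⟨c, rfl⟩ := hz'
    exact ⟨a, b, c, by rw [add_assoc]⟩
  · rintro ⟨a, b, c, rfl⟩
    have hu : u ∈ Submodule.span ℝ ({u, v, w} : Set V6) := Submodule.subset_span (by simp)
    have hv : v ∈ Submodule.span ℝ ({u, v, w} : Set V6) := Submodule.subset_span (by simp)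
    have hw : w ∈ Submodule.span ℝ ({u, v, w} : Set V6) := Submodule.subset_span (by simp)
    exact Submodule.add_mem _ (Submodule.add_mem _ (Submodule.smul_mem _ _ hu)
      (Submodule.smul_mem _ _ hv)) (Submodule.smul_mem _ _ hw)

lemma IsSig21.finrank_eq {D : Submodule ℝ V6} (h : IsSig21 D) : finrank ℝ D = 3 := by
  obtain ⟨u, v, w, rfl, huu, hvv, hww, huv, huw, hvw⟩ := h
  have hli : LinearIndependent ℝ ![u, v, w] := by
    rw [Fintype.linearIndependent_iff]
    intro g hg
    rw [Fin.sum_univ_three] at hg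
    simp only [Matrix.cons_val_zero, Matrix.cons_val_one, Matrix.head_cons,
      Matrix.cons_val_two, Matrix.tail_cons] at hg
    have key : ∀ t : V6, B (g 0 • u + g 1 • v + g 2 • w) t =
        g 0 * B u t + g 1 * B v t + g 2 * B w t := by
      intro t
      rw [B_add_left, B_add_left, B_smul_left, B_smul_left, B_smul_left]
    have h0 : g 0 = 0 := by
      have := key u
      rw [hg, B_zero_left, huu, B_symm v u, huv, B_symm w u, huw] at this
      linarith
    have h1 : g 1 = 0 := by
      have := key v
      rw [hg, B_zero_left, hvv, huv, B_symm w v, hvw] at this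
      linarith
    have h2 : g 2 = 0 := by
      have := key w
      rw [hg, B_zero_left, hww, huw, hvw] at this
      linarith
    intro i; fin_cases i <;> assumption
  have hrange : ({u, v, w} : Set V6) = Set.range ![u, v, w] := by
    simp only [Matrix.range_cons, Matrix.range_empty]
    ext x; simp; tauto
  rw [hrange, finrank_span_eq_card hli]
  simp

lemma IsSig21.nondeg {D : Submodule ℝ V6} (h : IsSig21 D) {x : V6} (hx : x ∈ D)
    (hperp : ∀ y ∈ D, B x y = 0) : x = 0 := by
  obtain ⟨u, v, w, rfl, huu, hvv, hww, huv, huw, hvw⟩ := h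
  have hu : u ∈ Submodule.span ℝ ({u, v, w} : Set V6) := Submodule.subset_span (by simp)
  have hv : v ∈ Submodule.span ℝ ({u, v, w} : Set V6) := Submodule.subset_span (by simp)
  have hw : w ∈ Submodule.span ℝ ({u, v, w} : Set V6) := Submodule.subset_span (by simp)
  obtain ⟨a, b, c, rfl⟩ := mem_span_triple.1 hx
  have key : ∀ t : V6, B (a • u + b • v + c • w) t =
      a * B u t + b * B v t + c * B w t := by
    intro t
    rw [B_add_left, B_add_left, B_smul_left, B_smul_left, B_smul_left]
  have h0 : a = 0 := by
    have h' := hperp u hu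
    rw [key u, huu, B_symm v u, huv, B_symm w u, huw] at h'
    linarith
  have h1 : b = 0 := by
    have h' := hperp v hv
    rw [key v, hvv, huv, B_symm w v, hvw] at h'
    linarith
  have h2 : c = 0 := by
    have h' := hperp w hw
    rw [key w, hww, huw, hvw] at h'
    linarith
  rw [h0, h1, h2]; simp

lemma IsDupin.orth {D E : Submodule ℝ V6} (h : IsDupin D E) {x y : V6}
    (hx : x ∈ D) (hy : y ∈ E) : B x y = 0 := by
  rw [B_symm]; exact (h.2.2 y).1 hy x hx

lemma IsDupin.inf_eq_bot {D E : Submodule ℝ V6} (h : IsDupin D E) : D ⊓ E = ⊥ := by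
  rw [eq_bot_iff]
  rintro x ⟨hxD, hxE⟩
  exact h.1.nondeg hxD ((h.2.2 x).1 hxE)

lemma IsDupin.sup_eq_top {D E : Submodule ℝ V6} (h : IsDupin D E) : D ⊔ E = ⊤ := by
  apply Submodule.eq_top_of_finrank_eq
  have hh := Submodule.finrank_sup_add_finrank_inf_eq D E
  rw [h.inf_eq_bot, finrank_bot, add_zero, h.1.finrank_eq, h.2.1.finrank_eq] at hh
  rw [hh]; simp

lemma IsDupin.mem_left {D E : Submodule ℝ V6} (h : IsDupin D E) {x : V6}
    (hx : ∀ y ∈ E, B x y = 0) : x ∈ D := by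
  have hxt : x ∈ D ⊔ E := by rw [h.sup_eq_top]; trivial
  obtain ⟨d, hd, e, he, hde⟩ := Submodule.mem_sup.1 hxt
  have he0 : e = 0 := by
    apply h.2.1.nondeg he
    intro y hy
    have h1 : B (d + e) y = B d y + B e y := B_add_left d e y
    rw [hde, hx y hy, h.orth hd hy] at h1
    linarith
  rw [he0, add_zero] at hde
  rwa [← hde]

open Module in
lemma split_two {F P S : Submodule ℝ V6} (hF : finrank ℝ F = 2) (hP : finrank ℝ P = 1)
    (hS : finrank ℝ S = 1) (hPF : P ≤ F) (hSF : S ≤ F) (hPS : P ⊓ S = ⊥) : P ⊔ S = F := by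
  apply Submodule.eq_of_le_of_finrank_eq (sup_le hPF hSF)
  have hh := Submodule.finrank_sup_add_finrank_inf_eq P S
  rw [hPS, finrank_bot, add_zero, hP, hS] at hh
  rw [hh, hF]

lemma mem_pPerp {x p : V6} : x ∈ pPerp p ↔ B x p = 0 := Iff.rfl

/-- The two curvature sphere congruences of a discrete Dupin cyclide lie in
two fixed orthogonal `(2,1)`-planes, and its Lie cyclide congruence is constant. -/
theorem discrete_dupin_cyclide_constant_lie_cyclide
    (f : ℤ × ℤ → Submodule ℝ V6) (hf : IsDiscreteDupin f)
    (hdim : ∀ n : ℤ, Module.finrank ℝ ↥(⨆ m : ℤ, sMinus f m n) = 3) :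
    ∃ D E : Submodule ℝ V6, IsDupin D E ∧
      (∀ m n : ℤ, sPlus f m n ≤ D ∧ sMinus f m n ≤ E) ∧
      IsFaceCyclideCongruence f (fun _ => D) (fun _ => E) := by
  obtain ⟨⟨⟨hcon, hsp, hsm⟩, D1, E1, hC1, hc1⟩, ⟨_, D2, E2, hC2, hc2⟩⟩ := hf
  -- Step 1: sMinus is constant in n
  have hstep : ∀ m n : ℤ, sMinus f m (n + 1) = sMinus f m n := by
    intro m n
    obtain ⟨hDup2, hsp1, hsp2, hsm1, hsm2⟩ := hC2 m n
    have hPS : sPlus f m (n + 1) ⊓ sMinus f m n = ⊥ := by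
      rw [eq_bot_iff, ← hDup2.inf_eq_bot]
      exact inf_le_inf hsp2 hsm1
    have hsplit : sPlus f m (n + 1) ⊔ sMinus f m n = f (m, n + 1) :=
      split_two (hcon (m, n + 1)).1 (hsp m (n + 1)) (hsm m n)
        (inf_le_left : f (m, n + 1) ⊓ f (m + 1, n + 1) ≤ f (m, n + 1))
        (inf_le_right : f (m, n) ⊓ f (m, n + 1) ≤ f (m, n + 1)) hPS
    apply Submodule.eq_of_le_of_finrank_eq _ (by rw [hsm m (n + 1), hsm m n])
    intro x hx
    have hxF : x ∈ f (m, n + 1) :=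
      (inf_le_left : f (m, n + 1) ⊓ f (m, n + 1 + 1) ≤ f (m, n + 1)) hx
    rw [← hsplit] at hxF
    obtain ⟨p, hp, s, hs, hps⟩ := Submodule.mem_sup.1 hxF
    have hxE : x ∈ E2 (m, n) := by
      have h1 := (hC2 m (n + 1)).2.2.2.1 hx
      rwa [(hc2 m (n + 1) n).2] at h1
    have hpE : p ∈ E2 (m, n) := by
      have hpxs : p = x - s := by rw [← hps]; abel
      rw [hpxs]
      exact Submodule.sub_mem _ hxE (hsm1 hs)
    have hp0 : p = 0 := by
      have hmem : p ∈ D2 (m, n) ⊓ E2 (m, n) := ⟨hsp2 hp, hpE⟩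
      rwa [hDup2.inf_eq_bot, Submodule.mem_bot] at hmem
    rw [← hps, hp0, zero_add]
    exact hs
  -- Step 2: sPlus is constant in m
  have hstepP : ∀ m n : ℤ, sPlus f (m + 1) n = sPlus f m n := by
    intro m n
    obtain ⟨hDup1, hsp1, hsp2, hsm1, hsm2⟩ := hC1 m n
    have hPS : sMinus f (m + 1) n ⊓ sPlus f m n = ⊥ := by
      rw [eq_bot_iff, ← hDup1.inf_eq_bot, inf_comm (D1 (m, n))]
      exact inf_le_inf hsm2 hsp1
    have hsplit : sMinus f (m + 1) n ⊔ sPlus f m n = f (m + 1, n) :=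
      split_two (hcon (m + 1, n)).1 (hsm (m + 1) n) (hsp m n)
        (inf_le_left : f (m + 1, n) ⊓ f (m + 1, n + 1) ≤ f (m + 1, n))
        (inf_le_right : f (m, n) ⊓ f (m + 1, n) ≤ f (m + 1, n)) hPS
    apply Submodule.eq_of_le_of_finrank_eq _ (by rw [hsp (m + 1) n, hsp m n])
    intro x hx
    have hxF : x ∈ f (m + 1, n) :=
      (inf_le_left : f (m + 1, n) ⊓ f (m + 1 + 1, n) ≤ f (m + 1, n)) hx
    rw [← hsplit] at hxF
    obtain ⟨q, hq, t, ht, hqt⟩ := Submodule.mem_sup.1 hxF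
    have hxD : x ∈ D1 (m, n) := by
      have h1 := (hC1 (m + 1) n).2.1 hx
      rwa [(hc1 (m + 1) m n).1] at h1
    have hqD : q ∈ D1 (m, n) := by
      have hqxt : q = x - t := by rw [← hqt]; abel
      rw [hqxt]
      exact Submodule.sub_mem _ hxD (hsp1 ht)
    have hq0 : q = 0 := by
      have hmem : q ∈ D1 (m, n) ⊓ E1 (m, n) := ⟨hqD, hsm2 hq⟩
      rwa [hDup1.inf_eq_bot, Submodule.mem_bot] at hmem
    rw [← hqt, hq0, zero_add]
    exact ht
  -- Constancy over ℤ
  have hsmconst : ∀ m n : ℤ, sMinus f m n = sMinus f m 0 := by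
    intro m n
    induction n using Int.induction_on with
    | zero => rfl
    | succ k ih => rw [hstep m k, ih]
    | pred k ih =>
      have e2 : -((k : ℤ) + 1) = -(k : ℤ) - 1 := by ring
      have h2 := hstep m (-(k : ℤ) - 1)
      have e : (-(k : ℤ) - 1) + 1 = -(k : ℤ) := by ring
      rw [e] at h2
      rw [← h2, ih]
  have hspconst : ∀ m n : ℤ, sPlus f m n = sPlus f 0 n := by
    intro m n
    induction m using Int.induction_on with
    | zero => rfl
    | succ k ih => rw [hstepP k n, ih]
    | pred k ih =>
      have e2 : -((k : ℤ) + 1) = -(k : ℤ) - 1 := by ring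
      have h2 := hstepP (-(k : ℤ) - 1) n
      have e : (-(k : ℤ) - 1) + 1 = -(k : ℤ) := by ring
      rw [e] at h2
      rw [← h2, ih]
  -- The fixed Dupin cyclide
  set D := D1 (0, 0) with hDdef
  set E := E1 (0, 0) with hEdef
  have hDup : IsDupin D E := (hC1 0 0).1
  have hEmem : ∀ m n : ℤ, sMinus f m n ≤ E := by
    intro m n
    rw [hsmconst m n]
    have h1 : sMinus f m 0 ≤ E1 (m, 0) := (hC1 m 0).2.2.2.1
    rwa [(hc1 m 0 0).2] at h1
  have hEsup : (⨆ m : ℤ, sMinus f m 0) = E :=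
    Submodule.eq_of_le_of_finrank_eq (iSup_le fun m => hEmem m 0)
      (by rw [hdim 0, hDup.2.1.finrank_eq])
  have hDmem : ∀ m n : ℤ, sPlus f m n ≤ D := by
    intro m n x hx
    apply hDup.mem_left
    intro y hy
    rw [← hEsup] at hy
    rw [B_symm]
    have hsuff : (⨆ m' : ℤ, sMinus f m' 0) ≤ pPerp x := by
      apply iSup_le
      intro m' y' hy'
      have hx' : x ∈ sPlus f m' n := by
        rw [hspconst m' n, ← hspconst m n]; exact hx
      have hy'n : y' ∈ sMinus f m' n := by rw [hsmconst m' n]; exact hy'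
      have hyE2 : y' ∈ E2 (m', n) := (hC2 m' n).2.2.2.1 hy'n
      have hxD2 : x ∈ D2 (m', n) := (hC2 m' n).2.1 hx'
      rw [mem_pPerp, B_symm]
      exact (hC2 m' n).1.orth hxD2 hyE2
    exact hsuff hy
  exact ⟨D, E, hDup, fun m n => ⟨hDmem m n, hEmem m n⟩,
    fun m n => ⟨hDup, hDmem m n, hDmem m (n + 1), hEmem m n, hEmem (m + 1) n⟩⟩
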